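/- Let 0 ≤ k, l ≤ n and let E be a k-dimensional subspace and F an l-dimensional subspace of ℂ^n (with its standard inner product). Then there exist an orthonormal basis (e_i)_{i∈[k]} of E, an orthonormal basis (f_j)_{j∈[l]} of F, and numbers θ_1 ≤ θ_2 ≤ ⋯ ≤ θ_{min(k,l)} in [0, π/2] such that for every i ∈ [k] and j ∈ [l], the inner product ⟨e_i, f_j⟩ equals 0 if i ≠ j and equals cos(θ_i) if i = j. -/

import Mathlib

open Module Real
open scoped InnerProductSpace

/-- `e` is an orthonormal basis of the subspace `E`: an orthonormal family spanning `E`. -/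
def IsONBasisOf {n k : ℕ} (E : Submodule ℂ (EuclideanSpace ℂ (Fin n)))
    (e : Fin k → EuclideanSpace ℂ (Fin n)) : Prop :=
  Orthonormal ℂ e ∧ Submodule.span ℂ (Set.range e) = E

noncomputable section PrincipalAnglesAux

/-- Shortcut instance: the generic instance search for this blows up. -/
noncomputable instance instSubIPS {n : ℕ} (F : Submodule ℂ (EuclideanSpace ℂ (Fin n))) :
    InnerProductSpace ℂ F := Submodule.innerProductSpace F

noncomputable instance instSubInner {n : ℕ} (F : Submodule ℂ (EuclideanSpace ℂ (Fin n))) :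
    Inner ℂ F := (Submodule.innerProductSpace F).toInner

namespace PrincipalAnglesAux


lemma arccos_antitone : Antitone Real.arccos := fun x y h => by
  simp only [Real.arccos_eq_pi_div_two_sub_arcsin]
  have := Real.monotone_arcsin h
  linarith

variable {n : ℕ} (E F : Submodule ℂ (EuclideanSpace ℂ (Fin n)))

/-- The operator `P_F ∘ P_E` restricted to `F`. -/
def opA : F →ₗ[ℂ] F :=
  (Submodule.orthogonalProjectionOnto F).toLinearMap.comp
    (E.subtype.comp ((Submodule.orthogonalProjectionOnto E).toLinearMap.comp F.subtype))

lemma opA_apply (x : F) :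
    opA E F x = Submodule.orthogonalProjectionOnto F
      ((Submodule.orthogonalProjectionOnto E (x : EuclideanSpace ℂ (Fin n)) : EuclideanSpace ℂ (Fin n))) := rfl

lemma opA_inner (x y : F) :
    ⟪opA E F x, y⟫_ℂ =
      ⟪((Submodule.orthogonalProjectionOnto E (x : EuclideanSpace ℂ (Fin n))) : EuclideanSpace ℂ (Fin n)),
       ((Submodule.orthogonalProjectionOnto E (y : EuclideanSpace ℂ (Fin n))) : EuclideanSpace ℂ (Fin n))⟫_ℂ := by
  rw [opA_apply, ← inner_conj_symm _ y, Submodule.inner_orthogonalProjectionOnto_eq_of_mem_left,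
    inner_conj_symm,
    ← Submodule.inner_orthogonalProjectionOnto_eq_of_mem_left (K := E)
      (Submodule.orthogonalProjectionOnto E (x : EuclideanSpace ℂ (Fin n))) (y : EuclideanSpace ℂ (Fin n))]
  exact E.coe_inner _ _

lemma opA_isSymmetric : LinearMap.IsSymmetric (𝕜 := ℂ) (E := F) (opA E F) := by
  intro x y
  rw [opA_inner, ← inner_conj_symm, ← opA_inner, inner_conj_symm]

end PrincipalAnglesAux

end PrincipalAnglesAux

open PrincipalAnglesAux

set_option maxHeartbeats 2000000 in
/-- existence of principal angles between a `k`-dimensional subspace `E`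
and an `l`-dimensional subspace `F` of `ℂ^n`. -/
theorem principal_angles_exist {n k l : ℕ} (hk : k ≤ n) (hl : l ≤ n)
    (E F : Submodule ℂ (EuclideanSpace ℂ (Fin n)))
    (hE : finrank ℂ E = k) (hF : finrank ℂ F = l) :
    ∃ θ : Fin (min k l) → ℝ,
      Monotone θ ∧ (∀ i, θ i ∈ Set.Icc (0:ℝ) (π/2)) ∧
      ∃ (e : Fin k → EuclideanSpace ℂ (Fin n)) (f : Fin l → EuclideanSpace ℂ (Fin n)),
        IsONBasisOf E e ∧ IsONBasisOf F f ∧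
        ∀ (i : Fin k) (j : Fin l),
          ⟪e i, f j⟫_ℂ =
            if h : (i : ℕ) = (j : ℕ)
            then (Real.cos (θ ⟨i, by have := i.isLt; have := j.isLt; omega⟩) : ℂ)
            else 0 := by
  classical
  have hsym := opA_isSymmetric E F
  -- eigenvector basis of the symmetric operator `opA E F` on `F`
  let b0 : OrthonormalBasis (Fin l) ℂ F := hsym.eigenvectorBasis hF
  let μ0 : Fin l → ℝ := hsym.eigenvalues hF
  -- sort eigenvalues decreasingly
  let σ : Equiv.Perm (Fin l) := Tuple.sort (fun j => -μ0 j)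
  let μ : Fin l → ℝ := fun j => μ0 (σ j)
  have hμanti : Antitone μ := by
    intro a b hab
    have h := Tuple.monotone_sort (fun j => -μ0 j) hab
    simpa [μ] using neg_le_neg_iff.mp h
  let fb : Fin l → F := fun j => b0 (σ j)
  have hfb_on : Orthonormal ℂ fb := b0.orthonormal.comp σ σ.injective
  have heig : ∀ j, opA E F (fb j) = (μ j : ℂ) • fb j := fun j =>
    hsym.apply_eigenvectorBasis hF (σ j)
  let w : Fin l → E := fun j => Submodule.orthogonalProjectionOnto E (fb j : EuclideanSpace ℂ (Fin n))
  -- inner products of the projected eigenvectors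
  have hw_inner : ∀ j j', ⟪w j, w j'⟫_ℂ = if j = j' then (μ j : ℂ) else 0 := by
    intro j j'
    rw [E.coe_inner, ← opA_inner, heig j, inner_smul_left (E := F),
      orthonormal_iff_ite.mp hfb_on]
    simp only [Complex.conj_ofReal]
    split <;> simp
  have hμ_eq : ∀ j, μ j = ‖(w j : EuclideanSpace ℂ (Fin n))‖ ^ 2 := by
    intro j
    have h := hw_inner j j
    rw [if_pos rfl] at h
    have h2 : ⟪w j, w j⟫_ℂ = ((‖(w j : EuclideanSpace ℂ (Fin n))‖ : ℂ)) ^ 2 := by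
      rw [E.coe_inner, inner_self_eq_norm_sq_to_K]
      norm_cast
    rw [h] at h2
    exact_mod_cast h2
  have hμ_nonneg : ∀ j, 0 ≤ μ j := fun j => (hμ_eq j) ▸ sq_nonneg _
  have hμ_le_one : ∀ j, μ j ≤ 1 := by
    intro j
    have hnorm : ‖(w j : EuclideanSpace ℂ (Fin n))‖ ≤ 1 := by
      have h1 : ‖(w j : EuclideanSpace ℂ (Fin n))‖ = ‖w j‖ := rfl
      have h2 : ‖w j‖ ≤ ‖(Submodule.orthogonalProjectionOnto E :
          EuclideanSpace ℂ (Fin n) →L[ℂ] E)‖ * ‖(fb j : EuclideanSpace ℂ (Fin n))‖ :=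
        ContinuousLinearMap.le_opNorm _ _
      have h3 : ‖(fb j : EuclideanSpace ℂ (Fin n))‖ = 1 := hfb_on.1 j
      have h4 := Submodule.orthogonalProjectionOnto_norm_le E
      rw [h1]
      calc ‖w j‖ ≤ _ := h2
        _ = ‖(Submodule.orthogonalProjectionOnto E : EuclideanSpace ℂ (Fin n) →L[ℂ] E)‖ := by
            rw [h3, mul_one]
        _ ≤ 1 := h4
    calc μ j = ‖(w j : EuclideanSpace ℂ (Fin n))‖ ^ 2 := hμ_eq j
      _ ≤ 1 := pow_le_one₀ (norm_nonneg _) hnorm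
  -- number of nonzero eigenvalues
  let m : ℕ := (Finset.univ.filter fun j : Fin l => μ j ≠ 0).card
  have hm_le_l : m ≤ l := by
    calc m ≤ Finset.univ.card := Finset.card_filter_le _ _
      _ = l := by simp
  have hlt_of_ne : ∀ j : Fin l, μ j ≠ 0 → (j : ℕ) < m := by
    intro j hj
    have hpos : 0 < μ j := lt_of_le_of_ne (hμ_nonneg j) (Ne.symm hj)
    have hsub : Finset.Iic j ⊆ Finset.univ.filter fun j' : Fin l => μ j' ≠ 0 := by
      intro j' hj'
      rw [Finset.mem_Iic] at hj'
      exact Finset.mem_filter.mpr ⟨Finset.mem_univ _,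
        ne_of_gt (lt_of_lt_of_le hpos (hμanti hj'))⟩
    have := Finset.card_le_card hsub
    rw [Fin.card_Iic] at this
    omega
  have hne_of_lt : ∀ j : Fin l, (j : ℕ) < m → μ j ≠ 0 := by
    intro j hjm hj
    have hsub : (Finset.univ.filter fun j' : Fin l => μ j' ≠ 0) ⊆ Finset.Iio j := by
      intro j' hj'
      rw [Finset.mem_filter] at hj'
      rw [Finset.mem_Iio]
      by_contra hle
      push_neg at hle
      exact hj'.2 (le_antisymm ((hj ▸ hμanti hle : μ j' ≤ 0)) (hμ_nonneg j'))
    have := Finset.card_le_card hsub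
    rw [Fin.card_Iio] at this
    omega
  -- the normalized projections form an orthonormal family in `E`
  have hsqrt_ne : ∀ j : Fin l, μ j ≠ 0 → ((Real.sqrt (μ j) : ℂ)) ≠ 0 := by
    intro j hj
    have : 0 < μ j := lt_of_le_of_ne (hμ_nonneg j) (Ne.symm hj)
    simpa [Complex.ofReal_eq_zero] using (Real.sqrt_ne_zero'.mpr this)
  have huinner : ∀ (j j' : Fin l), μ j ≠ 0 → μ j' ≠ 0 →
      ⟪((Real.sqrt (μ j) : ℂ))⁻¹ • w j, ((Real.sqrt (μ j') : ℂ))⁻¹ • w j'⟫_ℂ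
        = if j = j' then 1 else 0 := by
    intro j j' hj hj'
    rw [inner_smul_left (E := E), inner_smul_right (E := E), hw_inner]
    split
    · next heq =>
      subst heq
      have hpos : 0 < μ j := lt_of_le_of_ne (hμ_nonneg j) (Ne.symm hj)
      rw [map_inv₀, Complex.conj_ofReal]
      norm_cast
      have hs : Real.sqrt (μ j) ≠ 0 := ne_of_gt (Real.sqrt_pos.mpr hpos)
      have h2 : Real.sqrt (μ j) * Real.sqrt (μ j) = μ j := Real.mul_self_sqrt (le_of_lt hpos)
      field_simp
      rw [sq, h2]
    · simp
  have hm_le_k : m ≤ k := by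
    set u : {j : Fin l // μ j ≠ 0} → E :=
      fun j => ((Real.sqrt (μ j.1) : ℂ))⁻¹ • w j.1 with hu
    have hu_on : Orthonormal ℂ u := by
      rw [orthonormal_iff_ite]
      intro j j'
      rw [hu]
      rw [huinner j.1 j'.1 j.2 j'.2]
      simp [Subtype.ext_iff]
    have hcard := hu_on.linearIndependent.fintype_card_le_finrank
    rwa [Fintype.card_subtype, hE] at hcard
  -- build an orthonormal basis of `E` extending the normalized projections
  let s : Set (Fin k) := {i | (i : ℕ) < m}
  let v : Fin k → E := fun i =>
    if h : (i : ℕ) < m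
    then ((Real.sqrt (μ ⟨i, lt_of_lt_of_le h hm_le_l⟩) : ℂ))⁻¹ • w ⟨i, lt_of_lt_of_le h hm_le_l⟩
    else 0
  have hv_on : Orthonormal ℂ (s.restrict v) := by
    rw [orthonormal_iff_ite]
    rintro ⟨i, hi⟩ ⟨i', hi'⟩
    have hi0 : (i : ℕ) < m := hi
    have hi0' : (i' : ℕ) < m := hi'
    simp only [Set.restrict, Set.domRestrict_apply, v, dif_pos hi0, dif_pos hi0']
    rw [huinner _ _ (hne_of_lt _ hi0) (hne_of_lt _ hi0')]
    have : (⟨i, lt_of_lt_of_le hi0 hm_le_l⟩ : Fin l) = ⟨i', lt_of_lt_of_le hi0' hm_le_l⟩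
        ↔ (⟨i, hi⟩ : s) = ⟨i', hi'⟩ := by
      simp [Fin.ext_iff, Subtype.ext_iff]
    split
    · next heq => rw [if_pos (this.mp heq)]
    · next hne => rw [if_neg (fun hc => hne (this.mpr hc))]
  have hcardE : finrank ℂ E = Fintype.card (Fin k) := by simp [hE]
  obtain ⟨bE, hbE⟩ := hv_on.exists_orthonormalBasis_extension_of_card_eq hcardE
  -- the bases and angles
  let e : Fin k → EuclideanSpace ℂ (Fin n) := fun i => (bE i : EuclideanSpace ℂ (Fin n))
  let f : Fin l → EuclideanSpace ℂ (Fin n) := fun j => (fb j : EuclideanSpace ℂ (Fin n))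
  let θ : Fin (min k l) → ℝ := fun t =>
    Real.arccos (Real.sqrt (μ (Fin.castLE (min_le_right k l) t)))
  refine ⟨θ, ?_, ?_, e, f, ?_, ?_, ?_⟩
  · -- Monotone θ
    intro a b hab
    apply arccos_antitone
    apply Real.sqrt_le_sqrt
    exact hμanti (show Fin.castLE (min_le_right k l) a ≤ Fin.castLE (min_le_right k l) b from hab)
  · -- range of θ
    intro t
    exact ⟨Real.arccos_nonneg _, Real.arccos_le_pi_div_two.mpr (Real.sqrt_nonneg _)⟩
  · -- IsONBasisOf E e
    constructor
    · rw [orthonormal_iff_ite]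
      intro i i'
      have := orthonormal_iff_ite.mp bE.orthonormal i i'
      rwa [E.coe_inner] at this
    · have hre : Set.range e = E.subtype '' Set.range bE := by
        rw [← Set.range_comp]; rfl
      rw [hre, Submodule.span_image, ← bE.coe_toBasis, bE.toBasis.span_eq,
        Submodule.map_subtype_top]
  · -- IsONBasisOf F f
    constructor
    · rw [orthonormal_iff_ite]
      intro j j'
      have := orthonormal_iff_ite.mp hfb_on j j'
      rwa [F.coe_inner] at this
    · have hre : Set.range f = F.subtype '' Set.range fb := by
        rw [← Set.range_comp]; rfl
      have hrfb : Set.range fb = Set.range (b0 : Fin l → F) :=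
        σ.surjective.range_comp b0
      rw [hre, Submodule.span_image, hrfb, ← b0.coe_toBasis, b0.toBasis.span_eq,
        Submodule.map_subtype_top]
  · -- the inner products
    intro i j
    have key : ⟪e i, f j⟫_ℂ = ⟪bE i, w j⟫_ℂ := by
      rw [show ⟪bE i, w j⟫_ℂ = ⟪(bE i : EuclideanSpace ℂ (Fin n)),
        (fb j : EuclideanSpace ℂ (Fin n))⟫_ℂ from
        Submodule.inner_orthogonalProjectionOnto_eq_of_mem_left (K := E) (bE i) (fb j : EuclideanSpace ℂ (Fin n))]
    by_cases hj : μ j = 0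
    · -- zero eigenvalue: projection is zero
      have hwj : w j = 0 := by
        have h := hμ_eq j
        rw [hj] at h
        have h0 : ‖(w j : EuclideanSpace ℂ (Fin n))‖ ^ 2 = 0 := h.symm
        have h1 : ‖(w j : EuclideanSpace ℂ (Fin n))‖ = 0 :=
          (pow_eq_zero_iff two_ne_zero).mp h0
        exact Subtype.ext (norm_eq_zero.mp h1)
      rw [key, hwj, inner_zero_right]
      split
      · next heq =>
        have hθ : ∀ (pf : (i : ℕ) < min k l), θ ⟨(i : ℕ), pf⟩
            = Real.arccos (Real.sqrt (μ j)) := by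
          intro pf
          have hcast : (Fin.castLE (min_le_right k l) ⟨(i : ℕ), pf⟩ : Fin l) = j :=
            Fin.ext heq
          simp only [θ]
          rw [hcast]
        rw [hθ, hj, Real.sqrt_zero, Real.arccos_zero, Real.cos_pi_div_two]
        norm_num
      · rfl
    · -- nonzero eigenvalue
      have hjm : (j : ℕ) < m := hlt_of_ne j hj
      have hjk : (j : ℕ) < k := lt_of_lt_of_le hjm hm_le_k
      obtain ⟨i', hi'val⟩ : ∃ i' : Fin k, (i' : ℕ) = (j : ℕ) := ⟨⟨(j : ℕ), hjk⟩, rfl⟩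
      have hi'm : (i' : ℕ) < m := hi'val ▸ hjm
      have hi's : i' ∈ s := hi'm
      have hji' : (⟨(i' : ℕ), lt_of_lt_of_le hi'm hm_le_l⟩ : Fin l) = j := Fin.ext hi'val
      have hbEi' : bE i' = ((Real.sqrt (μ j) : ℂ))⁻¹ • w j := by
        have h1 : bE i' = v i' := hbE i' hi's
        have h2 : v i' = ((Real.sqrt (μ ⟨(i' : ℕ), lt_of_lt_of_le hi'm hm_le_l⟩) : ℂ))⁻¹
            • w ⟨(i' : ℕ), lt_of_lt_of_le hi'm hm_le_l⟩ := dif_pos hi'm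
        rw [h1, h2, hji']
      have hwj : w j = ((Real.sqrt (μ j) : ℂ)) • bE i' := by
        rw [hbEi', smul_inv_smul₀ (hsqrt_ne j hj)]
      rw [key, hwj, inner_smul_right (E := E), orthonormal_iff_ite.mp bE.orthonormal]
      have hii' : (i = i') ↔ ((i : ℕ) = (j : ℕ)) := by
        rw [Fin.ext_iff, hi'val]
      by_cases hc : (i : ℕ) = (j : ℕ)
      · rw [if_pos (hii'.mpr hc), mul_one, dif_pos hc]
        have hθ : ∀ (pf : (i : ℕ) < min k l), θ ⟨(i : ℕ), pf⟩
            = Real.arccos (Real.sqrt (μ j)) := by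
          intro pf
          have hcast : (Fin.castLE (min_le_right k l) ⟨(i : ℕ), pf⟩ : Fin l) = j :=
            Fin.ext hc
          simp only [θ]
          rw [hcast]
        rw [hθ, Real.cos_arccos (le_trans (by norm_num) (Real.sqrt_nonneg _))
          (Real.sqrt_le_one.mpr (hμ_le_one j))]
      · rw [if_neg (fun hcc => hc (hii'.mp hcc)), mul_zero, dif_neg hc]
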